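/- Let N be a free abelian group of rank n, let φ : ℤ^r → N be a surjective group homomorphism with kernel L, and let S ⊆ Fin r be a subset of cardinality n such that the images (φ(eᵢ) ⊗ 1)_{i∈S} form a basis of N ⊗ ℚ. Then the subgroup K_σ^∨ of Hom(L, ℤ) generated by the restrictions to L of the coordinate functionals eⱼ* for j ∉ S is a subgroup of finite index in Hom(L, ℤ). -/

import Mathlib

open scoped TensorProduct

/-- Let `N` be free abelian of rank `n`, `φ : ℤ^r → N` surjective with kernel
`L`, and `S ⊆ Fin r` of cardinality `n` such that the images `φ(eᵢ) ⊗ 1`, `i ∈ S`, form a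
basis of `N ⊗ ℚ`. Then the subgroup `K_σ^∨` of `Hom(L,ℤ)` generated by the restrictions to
`L` of the coordinate functionals `eⱼ*`, `j ∉ S`, has finite index in `Hom(L,ℤ)`. -/
theorem dual_divisor_lattice_finite_index
    {N : Type*} [AddCommGroup N] [Module ℤ N] [Module.Free ℤ N] [Module.Finite ℤ N]
    (n r : ℕ) (hn : Module.finrank ℤ N = n)
    (φ : (Fin r → ℤ) →ₗ[ℤ] N) (hφ : Function.Surjective φ)
    (S : Finset (Fin r)) (hcard : S.card = n)
    (hli : LinearIndependent ℚ
      (fun i : S => (1 : ℚ) ⊗ₜ[ℤ] φ (Pi.single (i : Fin r) 1) : S → ℚ ⊗[ℤ] N))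
    (hspan : Submodule.span ℚ
      (Set.range (fun i : S => (1 : ℚ) ⊗ₜ[ℤ] φ (Pi.single (i : Fin r) 1)
        : S → ℚ ⊗[ℤ] N)) = ⊤) :
    Finite ((Module.Dual ℤ ↥(LinearMap.ker φ)) ⧸
      Submodule.span ℤ
        (Set.range (fun j : {j : Fin r // j ∉ S} =>
          (LinearMap.proj (j : Fin r)).comp (LinearMap.ker φ).subtype))) := by
  classical
  set L := LinearMap.ker φ with hL
  set D : Fin r → Module.Dual ℤ L := fun t => (LinearMap.proj t).comp L.subtype with hDdef
  set P : Submodule ℤ (Module.Dual ℤ L) :=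
    Submodule.span ℤ (Set.range (fun j : {j : Fin r // j ∉ S} => D (j : Fin r))) with hP
  -- Step 1: splitting
  obtain ⟨s, hs⟩ := Module.projective_lifting_property φ LinearMap.id hφ
  have hπ0 : ∀ x, ((LinearMap.id : (Fin r → ℤ) →ₗ[ℤ] (Fin r → ℤ)) - s ∘ₗ φ) x ∈ L := by
    intro x
    simp only [LinearMap.mem_ker, LinearMap.sub_apply, LinearMap.id_apply, LinearMap.comp_apply,
      map_sub, hL]
    have := congrArg (fun g => g (φ x)) hs
    simp only [LinearMap.comp_apply, LinearMap.id_apply] at this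
    simp [this]
  set π : (Fin r → ℤ) →ₗ[ℤ] L := LinearMap.codRestrict L _ hπ0 with hπdef
  have hπ : ∀ x : L, π (x : Fin r → ℤ) = x := by
    intro x
    apply Subtype.ext
    have hx : φ (x : Fin r → ℤ) = 0 := x.2
    simp [hπdef, LinearMap.codRestrict, hx]
  have hsingle : ∀ x : L, (x : Fin r → ℤ) = ∑ t : Fin r, (x : Fin r → ℤ) t • Pi.single t (1 : ℤ) := by
    intro x; ext u; simp [Pi.single_apply]
  -- Step 2: the D t span the dual of L
  have hgen : Submodule.span ℤ (Set.range D) = ⊤ := by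
    rw [eq_top_iff]
    rintro f -
    have hf : f = ∑ t : Fin r, f (π (Pi.single t 1)) • D t := by
      ext x
      have h2 : π (x : Fin r → ℤ) = ∑ t : Fin r, (x : Fin r → ℤ) t • π (Pi.single t 1) := by
        conv_lhs => rw [hsingle x]
        rw [map_sum]
        exact Finset.sum_congr rfl fun t _ => map_smul π _ _
      have h3 : f (π (x : Fin r → ℤ)) = ∑ t : Fin r, (x : Fin r → ℤ) t • f (π (Pi.single t 1)) := by
        rw [h2, map_sum]
        exact Finset.sum_congr rfl fun t _ => by rw [map_smul]
      calc f x = ∑ t : Fin r, (x : Fin r → ℤ) t • f (π (Pi.single t 1)) := by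
            rw [← h3, hπ]
        _ = (∑ t : Fin r, f (π (Pi.single t 1)) • D t) x := by
            simp only [LinearMap.sum_apply, LinearMap.smul_apply, smul_eq_mul, hDdef,
              LinearMap.comp_apply, LinearMap.proj_apply, Submodule.subtype_apply]
            exact Finset.sum_congr rfl fun t _ => mul_comm _ _
    rw [hf]
    exact Submodule.sum_mem _ fun t _ =>
      Submodule.smul_mem _ _ (Submodule.subset_span ⟨t, rfl⟩)
  -- ℚ-side setup
  set v : Fin r → ℚ ⊗[ℤ] N := fun i => (1 : ℚ) ⊗ₜ[ℤ] φ (Pi.single i 1) with hv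
  set F : (Fin r → ℚ) →ₗ[ℚ] ℚ ⊗[ℤ] N := (Pi.basisFun ℚ (Fin r)).constr ℚ v with hF
  have hFapply : ∀ y : Fin r → ℚ, F y = ∑ t : Fin r, y t • v t := by
    intro y
    rw [hF, Module.Basis.constr_apply_fintype]
    simp
  set W := LinearMap.ker F with hW
  set ι : (Fin r → ℤ) →ₗ[ℤ] (Fin r → ℚ) :=
    LinearMap.pi (fun t => (Algebra.linearMap ℤ ℚ).comp (LinearMap.proj t)) with hι
  have hsingleF : ∀ t : Fin r, F (Pi.single t 1) = v t := by
    intro t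
    have : (Pi.single t 1 : Fin r → ℚ) = Pi.basisFun ℚ (Fin r) t := by
      rw [Pi.basisFun_apply]
    rw [this, hF, Module.Basis.constr_basis]
  have hAB : (F.restrictScalars ℤ).comp ι
      = ((TensorProduct.mk ℤ ℚ N) 1).comp φ := by
    apply (Pi.basisFun ℤ (Fin r)).ext
    intro t
    rw [Pi.basisFun_apply]
    have h1 : ι (Pi.single t 1) = Pi.single t 1 := by
      funext u
      simp [hι, Pi.single_apply, apply_ite]
    simp only [LinearMap.comp_apply, LinearMap.restrictScalars_apply, h1, hsingleF,
      TensorProduct.mk_apply, hv]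
    rfl
  have hembed : ∀ x : L, (fun t => ((x : Fin r → ℤ) t : ℚ)) ∈ W := by
    intro x
    have hx : φ (x : Fin r → ℤ) = 0 := x.2
    have h1 : (fun t => ((x : Fin r → ℤ) t : ℚ)) = ι (x : Fin r → ℤ) := by
      funext t; simp [hι]
    rw [hW, LinearMap.mem_ker, h1]
    have h2 := congrArg (fun g => g (x : Fin r → ℤ)) hAB
    simp only [LinearMap.comp_apply, LinearMap.restrictScalars_apply] at h2
    rw [h2]
    exact (congrArg ((TensorProduct.mk ℤ ℚ N) 1) hx).trans (map_zero _)
  -- key torsion fact for each coordinate functional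
  have key : ∀ i : Fin r, ∃ k : (nonZeroDivisors ℤ), (k : ℤ) • D i ∈ P := by
    intro i
    set G : Fin r → Module.Dual ℚ W := fun t => (LinearMap.proj t).comp W.subtype with hG
    have hker : (⨅ j : {j : Fin r // j ∉ S}, LinearMap.ker (G (j : Fin r)))
        ≤ LinearMap.ker (G i) := by
      intro y hy
      have hSc : ∀ j : Fin r, j ∉ S → (y : Fin r → ℚ) j = 0 := by
        intro j hj
        have := (Submodule.mem_iInf _).mp hy ⟨j, hj⟩
        simpa [hG] using this
      have hFy : ∑ t : Fin r, (y : Fin r → ℚ) t • v t = 0 := by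
        rw [← hFapply]; exact y.2
      have hsplit : ∑ t : Fin r, (y : Fin r → ℚ) t • v t
          = ∑ t : S, (y : Fin r → ℚ) (t : Fin r) • v (t : Fin r) := by
        rw [Finset.sum_coe_sort S (fun t => (y : Fin r → ℚ) t • v t)]
        refine (Finset.sum_subset S.subset_univ fun t _ ht => ?_).symm
        rw [hSc t ht, zero_smul]
      rw [hsplit] at hFy
      have hy0 : ∀ t : S, (y : Fin r → ℚ) (t : Fin r) = 0 :=
        Fintype.linearIndependent_iff.mp hli (fun t : S => (y : Fin r → ℚ) (t : Fin r)) hFy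
      have : (y : Fin r → ℚ) = 0 := by
        ext t
        by_cases ht : t ∈ S
        · exact hy0 ⟨t, ht⟩
        · exact hSc t ht
      simp [hG, this]
    have hmem : G i ∈ Submodule.span ℚ
        (Set.range fun j : {j : Fin r // j ∉ S} => G (j : Fin r)) :=
      mem_span_of_iInf_ker_le_ker hker
    obtain ⟨c, hc⟩ := (Submodule.mem_span_range_iff_exists_fun ℚ).1 hmem
    obtain ⟨b, hb⟩ := IsLocalization.exist_integer_multiples (nonZeroDivisors ℤ) Finset.univ c
    have hb' : ∀ j : {j : Fin r // j ∉ S}, ∃ aj : ℤ, (aj : ℚ) = (b : ℤ) • c j := by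
      intro j
      obtain ⟨aj, haj⟩ := hb j (Finset.mem_univ j)
      exact ⟨aj, by simpa using haj⟩
    choose a ha using hb'
    refine ⟨b, ?_⟩
    have heq : (b : ℤ) • D i = ∑ j : {j : Fin r // j ∉ S}, a j • D (j : Fin r) := by
      ext x
      have hcx := congrArg (fun g => g ⟨fun t => ((x : Fin r → ℤ) t : ℚ), hembed x⟩) hc
      simp only [LinearMap.sum_apply, LinearMap.smul_apply, hG, LinearMap.comp_apply,
        LinearMap.proj_apply, Submodule.subtype_apply, smul_eq_mul] at hcx
      have hcast : ((((b : ℤ) • D i) x : ℤ) : ℚ)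
          = (((∑ j : {j : Fin r // j ∉ S}, a j • D (j : Fin r)) x : ℤ) : ℚ) := by
        simp only [LinearMap.sum_apply, LinearMap.smul_apply, hDdef, LinearMap.comp_apply,
          LinearMap.proj_apply, Submodule.subtype_apply, smul_eq_mul]
        push_cast
        rw [← hcx, Finset.mul_sum]
        refine Finset.sum_congr rfl fun j _ => ?_
        rw [ha j]
        push_cast [zsmul_eq_mul]
        ring
      exact Int.cast_injective hcast
    rw [heq]
    exact Submodule.sum_mem _ fun j _ =>
      Submodule.smul_mem _ _ (Submodule.subset_span ⟨j, rfl⟩)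
  -- conclude: the quotient is a finitely generated torsion group
  have htor : Module.IsTorsion ℤ ((Module.Dual ℤ L) ⧸ P) := by
    intro q
    obtain ⟨f, rfl⟩ := Submodule.Quotient.mk_surjective P q
    have hfmem : f ∈ Submodule.span ℤ (Set.range D) := hgen ▸ Submodule.mem_top
    obtain ⟨c, hc⟩ := (Submodule.mem_span_range_iff_exists_fun ℤ).1 hfmem
    choose k hk using key
    refine ⟨⟨∏ t : Fin r, (k t : ℤ), prod_mem fun t _ => (k t).2⟩, ?_⟩
    have hsm : (∏ t : Fin r, (k t : ℤ)) • f ∈ P := by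
      rw [← hc, Finset.smul_sum]
      refine Submodule.sum_mem _ fun t _ => ?_
      have h1 : (∏ u : Fin r, (k u : ℤ)) • (c t • D t)
          = (c t * ∏ u ∈ Finset.univ.erase t, (k u : ℤ)) • ((k t : ℤ) • D t) := by
        rw [smul_smul, smul_smul]
        congr 1
        rw [← Finset.mul_prod_erase Finset.univ _ (Finset.mem_univ t)]
        ring
      rw [h1]
      exact P.smul_mem _ (hk t)
    rw [Submonoid.smul_def, ← Submodule.Quotient.mk_smul, Submodule.Quotient.mk_eq_zero]
    exact hsm
  exact Module.finite_of_fg_torsion _ htor
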